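/- Let σ be a connected skew shape with height a and width b. Then for every subshape ρ ∈ J(σ), the jaggedness satisfies 1 ≤ jag(ρ) ≤ min{2a, 2b, a+b−1}; in particular jag(ρ) < 4ab/(a+b). -/

import Mathlib

open Finset
open scoped Classical

noncomputable section

/-- A skew Young diagram `λ/ν` (in English notation) with height `a` and width `b`.
Rows are indexed `1,…,a` from top to bottom and columns `1,…,b` from left to right;
row `i` consists of the boxes in columns `ν i + 1, …, λ i` (each row is nonempty).
Box `[i,j]` has its southeast corner at the lattice point `(i,j)`, the point `(0,0)`
being the northwest corner of the bounding `a × b` rectangle. -/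
structure SkewShape where
  a : ℕ
  b : ℕ
  ha : 1 ≤ a
  hb : 1 ≤ b
  lam : ℕ → ℕ
  nu : ℕ → ℕ
  lam_anti : ∀ i j : ℕ, 1 ≤ i → i ≤ j → j ≤ a → lam j ≤ lam i
  nu_anti : ∀ i j : ℕ, 1 ≤ i → i ≤ j → j ≤ a → nu j ≤ nu i
  nu_lt_lam : ∀ i : ℕ, 1 ≤ i → i ≤ a → nu i < lam i
  lam_le_b : ∀ i : ℕ, 1 ≤ i → i ≤ a → lam i ≤ b
  lam_one : lam 1 = b
  nu_a : nu a = 0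

namespace SkewShape

variable (σ : SkewShape)

/-- The boxes of `σ` : pairs `[i,j]` with `1 ≤ i ≤ a` and `ν i < j ≤ λ i`.
The poset `P_σ` is the set of boxes ordered componentwise:
`[i,j] ≤ [k,l]` iff `i ≤ k` and `j ≤ l` (the product order on `ℕ × ℕ`). -/
def cells : Finset (ℕ × ℕ) :=
  (Finset.Icc 1 σ.a ×ˢ Finset.Icc 1 σ.b).filter
    (fun c => σ.nu c.1 < c.2 ∧ c.2 ≤ σ.lam c.1)

/-- The poset `P_σ` of boxes of `σ` is connected: it is nonempty, and any two boxes are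
joined by a walk along comparable pairs of boxes. -/
def Connected : Prop :=
  σ.cells.Nonempty ∧ ∀ p ∈ σ.cells, ∀ q ∈ σ.cells,
    Relation.ReflTransGen
      (fun x y : ℕ × ℕ => x ∈ σ.cells ∧ y ∈ σ.cells ∧ (x ≤ y ∨ y ≤ x)) p q

/-- `I` is an order ideal of `P_σ`, i.e. a subshape of `σ`. -/
def IsIdeal (I : Finset (ℕ × ℕ)) : Prop :=
  I ⊆ σ.cells ∧ ∀ p ∈ I, ∀ q ∈ σ.cells, q ≤ p → q ∈ I

/-- The set `J(σ)` of all order ideals of `P_σ` (equivalently, subshapes of `σ`). -/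
def idealsFinset : Finset (Finset (ℕ × ℕ)) :=
  σ.cells.powerset.filter fun I => σ.IsIdeal I

/-- Box `p` can be toggled in to the order ideal `I`. -/
def CanToggleIn (I : Finset (ℕ × ℕ)) (p : ℕ × ℕ) : Prop :=
  p ∈ σ.cells ∧ p ∉ I ∧ σ.IsIdeal (insert p I)

/-- Box `p` can be toggled out of the order ideal `I`. -/
def CanToggleOut (I : Finset (ℕ × ℕ)) (p : ℕ × ℕ) : Prop :=
  p ∈ I ∧ σ.IsIdeal (I.erase p)

/-- The jaggedness of `I`: the number of boxes that can be toggled in,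
plus the number of boxes that can be toggled out. -/
def jag (I : Finset (ℕ × ℕ)) : ℕ :=
  (σ.cells.filter fun p => σ.CanToggleIn I p).card +
  (σ.cells.filter fun p => σ.CanToggleOut I p).card

/-- The probability, under `μ`, that a random order ideal of `P_σ` satisfies `E`. -/
def pr (μ : Finset (ℕ × ℕ) → ℝ) (E : Finset (ℕ × ℕ) → Prop) : ℝ :=
  ∑ I ∈ σ.idealsFinset.filter E, μ I

/-- `μ` is a probability distribution on `J(σ)`. -/
def IsProbDist (μ : Finset (ℕ × ℕ) → ℝ) : Prop :=
  (∀ I, 0 ≤ μ I) ∧ (∑ I ∈ σ.idealsFinset, μ I = 1)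

/-- `μ` is toggle-symmetric: for every box `p` of `σ`, the probability that `p` can be
toggled in equals the probability that `p` can be toggled out. -/
def ToggleSymmetric (μ : Finset (ℕ × ℕ) → ℝ) : Prop :=
  ∀ p ∈ σ.cells,
    σ.pr μ (fun I => σ.CanToggleIn I p) = σ.pr μ (fun I => σ.CanToggleOut I p)

/-- The expectation of the statistic `f` with respect to `μ`. -/
def expect (μ : Finset (ℕ × ℕ) → ℝ) (f : Finset (ℕ × ℕ) → ℝ) : ℝ :=
  ∑ I ∈ σ.idealsFinset, μ I * f I

/-- `c` is a northwest outward corner of `σ`, occurring at the lattice point `c = (i,j)`: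
the northwest boundary of `σ` turns at `(i,j)` with its two steps
(the top edge of box `[i+1,j]` and the left edge of box `[i,j+1]`)
not bordering a common box of `σ`. -/
def IsNWCorner (c : ℕ × ℕ) : Prop :=
  (c.1 + 1, c.2) ∈ σ.cells ∧ (c.1, c.2 + 1) ∈ σ.cells ∧ (c.1, c.2) ∉ σ.cells

/-- `c` is a southeast outward corner of `σ`, occurring at the lattice point `c = (i,j)`:
the southeast boundary of `σ` turns at `(i,j)` with its two steps
(the right edge of box `[i+1,j]` and the bottom edge of box `[i,j+1]`)
not bordering a common box of `σ`. -/
def IsSECorner (c : ℕ × ℕ) : Prop :=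
  (c.1 + 1, c.2) ∈ σ.cells ∧ (c.1, c.2 + 1) ∈ σ.cells ∧ (c.1 + 1, c.2 + 1) ∉ σ.cells

/-- The set of northwest outward corners of `σ`. -/
def nwCorners : Finset (ℕ × ℕ) :=
  (Finset.range (σ.a + 1) ×ˢ Finset.range (σ.b + 1)).filter fun c => σ.IsNWCorner c

/-- The set of southeast outward corners of `σ`.
(Together, `nwCorners` and `seCorners` form the set `C(σ)` of outward corners.) -/
def seCorners : Finset (ℕ × ℕ) :=
  (Finset.range (σ.a + 1) ×ˢ Finset.range (σ.b + 1)).filter fun c => σ.IsSECorner c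

/-- The displacement `δ(c) = 1 − i/a − j/b` of a northwest corner occurring at `(i,j)`. -/
def nwDisp (c : ℕ × ℕ) : ℝ := 1 - (c.1 : ℝ) / (σ.a : ℝ) - (c.2 : ℝ) / (σ.b : ℝ)

/-- The displacement `δ(c) = −1 + i/a + j/b` of a southeast corner occurring at `(i,j)`. -/
def seDisp (c : ℕ × ℕ) : ℝ := -1 + (c.1 : ℝ) / (σ.a : ℝ) + (c.2 : ℝ) / (σ.b : ℝ)

/-- The lattice path of the subshape `I` includes both steps of the northwest corner at
`c = (i,j)`: neither box `[i+1,j]` nor box `[i,j+1]` belongs to `I`. -/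
def NWInPath (c : ℕ × ℕ) (I : Finset (ℕ × ℕ)) : Prop :=
  (c.1 + 1, c.2) ∉ I ∧ (c.1, c.2 + 1) ∉ I

/-- The lattice path of the subshape `I` includes both steps of the southeast corner at
`c = (i,j)`: both boxes `[i+1,j]` and `[i,j+1]` belong to `I`. -/
def SEInPath (c : ℕ × ℕ) (I : Finset (ℕ × ℕ)) : Prop :=
  (c.1 + 1, c.2) ∈ I ∧ (c.1, c.2 + 1) ∈ I

/-- The correction term `Σ_{c ∈ C(σ)} δ(c) · P_μ(c)`, where `P_μ(c)` is the
`μ`-probability that the lattice path of a random subshape includes both steps of `c`. -/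
def cornerCorrection (μ : Finset (ℕ × ℕ) → ℝ) : ℝ :=
  (∑ c ∈ σ.nwCorners, σ.nwDisp c * σ.pr μ (NWInPath c)) +
  (∑ c ∈ σ.seCorners, σ.seDisp c * σ.pr μ (SEInPath c))

end SkewShape

/- ===== auxiliary lemmas ===== -/

namespace SkewShape

variable (σ : SkewShape)

lemma mem_cells_iff {p : ℕ × ℕ} :
    p ∈ σ.cells ↔ 1 ≤ p.1 ∧ p.1 ≤ σ.a ∧ 1 ≤ p.2 ∧ p.2 ≤ σ.b ∧
      σ.nu p.1 < p.2 ∧ p.2 ≤ σ.lam p.1 := by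
  unfold cells
  simp only [Finset.mem_filter, Finset.mem_product, Finset.mem_Icc]
  tauto

/-- The rightmost occupied column of row `i` (at least `ν i`). -/
def rr (ρ : Finset (ℕ × ℕ)) (i : ℕ) : ℕ :=
  max (σ.nu i) ((ρ.filter (fun p => p.1 = i)).sup Prod.snd)

variable {σ}
variable {ρ : Finset (ℕ × ℕ)}

lemma le_rr {i j : ℕ} (h : (i, j) ∈ ρ) : j ≤ σ.rr ρ i := by
  refine le_trans ?_ (le_max_right _ _)
  have hm : (i, j) ∈ ρ.filter (fun p => p.1 = i) := Finset.mem_filter.mpr ⟨h, rfl⟩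
  exact Finset.le_sup (f := Prod.snd) hm

lemma rr_le_lam (hρ : σ.IsIdeal ρ) {i : ℕ} (hi : 1 ≤ i) (hia : i ≤ σ.a) :
    σ.rr ρ i ≤ σ.lam i := by
  refine max_le (le_of_lt (σ.nu_lt_lam i hi hia)) (Finset.sup_le ?_)
  intro p hp
  rw [Finset.mem_filter] at hp
  have h := σ.mem_cells_iff.mp (hρ.1 hp.1)
  rw [hp.2] at h
  exact h.2.2.2.2.2

lemma rr_le_b (hρ : σ.IsIdeal ρ) {i : ℕ} (hi : 1 ≤ i) (hia : i ≤ σ.a) :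
    σ.rr ρ i ≤ σ.b :=
  le_trans (rr_le_lam hρ hi hia) (σ.lam_le_b i hi hia)

lemma mem_of_le_rr (hρ : σ.IsIdeal ρ) {i j : ℕ} (hc : (i, j) ∈ σ.cells)
    (hj : j ≤ σ.rr ρ i) : (i, j) ∈ ρ := by
  have hcell := σ.mem_cells_iff.mp hc
  have hnu : σ.nu i < j := hcell.2.2.2.2.1
  have hS : j ≤ (ρ.filter (fun p => p.1 = i)).sup Prod.snd := by
    rcases max_choice (σ.nu i) ((ρ.filter (fun p => p.1 = i)).sup Prod.snd) with h1 | h1 <;>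
      rw [rr, h1] at hj
    · omega
    · exact hj
  have hne : (ρ.filter (fun p => p.1 = i)).Nonempty := by
    by_contra h
    rw [Finset.not_nonempty_iff_eq_empty] at h
    rw [h] at hS
    simp at hS
    omega
  obtain ⟨q, hq, hq2⟩ := Finset.exists_mem_eq_sup _ hne Prod.snd
  rw [Finset.mem_filter] at hq
  refine hρ.2 q hq.1 (i, j) hc ?_
  rw [Prod.le_def, hq.2]
  exact ⟨le_refl _, by omega⟩

lemma rr_anti (hρ : σ.IsIdeal ρ) {i i' : ℕ} (h1 : 1 ≤ i) (h2 : i ≤ i') (h3 : i' ≤ σ.a) :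
    σ.rr ρ i' ≤ σ.rr ρ i := by
  refine max_le (le_trans (σ.nu_anti i i' h1 h2 h3) (le_max_left _ _)) (Finset.sup_le ?_)
  intro p hp
  rw [Finset.mem_filter] at hp
  obtain ⟨hpρ, hpi⟩ := hp
  by_cases hle : p.2 ≤ σ.nu i
  · exact le_trans hle (le_max_left _ _)
  push_neg at hle
  have hcell := σ.mem_cells_iff.mp (hρ.1 hpρ)
  have hc : (i, p.2) ∈ σ.cells := by
    rw [σ.mem_cells_iff]
    dsimp only
    refine ⟨h1, le_trans h2 h3, hcell.2.2.1, hcell.2.2.2.1, hle, ?_⟩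
    calc p.2 ≤ σ.lam p.1 := hcell.2.2.2.2.2
      _ = σ.lam i' := by rw [hpi]
      _ ≤ σ.lam i := σ.lam_anti i i' h1 h2 h3
  have hmem : (i, p.2) ∈ ρ := by
    refine hρ.2 p hpρ (i, p.2) hc ?_
    rw [Prod.le_def]
    exact ⟨by omega, le_refl _⟩
  exact le_rr hmem

/-- Facts about a box that can be toggled out. -/
lemma toggleOut_facts (hρ : σ.IsIdeal ρ) {p : ℕ × ℕ} (h : σ.CanToggleOut ρ p) :
    1 ≤ p.1 ∧ p.1 ≤ σ.a ∧ 1 ≤ p.2 ∧ p.2 ≤ σ.b ∧ p.2 = σ.rr ρ p.1 := by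
  have hc : p ∈ σ.cells := hρ.1 h.1
  have hcell := σ.mem_cells_iff.mp hc
  refine ⟨hcell.1, hcell.2.1, hcell.2.2.1, hcell.2.2.2.1, ?_⟩
  have h1 : p.2 ≤ σ.rr ρ p.1 := le_rr (by rw [Prod.mk.eta]; exact h.1)
  by_contra hne
  have hlt : p.2 < σ.rr ρ p.1 := lt_of_le_of_ne h1 hne
  have hrl : σ.rr ρ p.1 ≤ σ.lam p.1 := rr_le_lam hρ hcell.1 hcell.2.1
  have hlb : σ.lam p.1 ≤ σ.b := σ.lam_le_b p.1 hcell.1 hcell.2.1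
  have hc2 : (p.1, p.2 + 1) ∈ σ.cells := by
    rw [σ.mem_cells_iff]
    dsimp only
    have := hcell.2.2.2.2.1
    exact ⟨hcell.1, hcell.2.1, by omega, by omega, by omega, by omega⟩
  have hmem : (p.1, p.2 + 1) ∈ ρ := mem_of_le_rr hρ hc2 (by omega)
  have hmem' : (p.1, p.2 + 1) ∈ ρ.erase p := by
    refine Finset.mem_erase.mpr ⟨?_, hmem⟩
    intro he
    have := congrArg Prod.snd he
    simp at this
  have hfin : p ∈ ρ.erase p := by
    refine h.2.2 _ hmem' p hc ?_
    rw [Prod.le_def]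
    exact ⟨le_refl _, by omega⟩
  exact Finset.notMem_erase p ρ hfin

/-- Facts about a box that can be toggled in. -/
lemma toggleIn_facts (hρ : σ.IsIdeal ρ) {p : ℕ × ℕ} (h : σ.CanToggleIn ρ p) :
    1 ≤ p.1 ∧ p.1 ≤ σ.a ∧ 1 ≤ p.2 ∧ p.2 ≤ σ.b ∧ σ.rr ρ p.1 < p.2 ∧
      (2 ≤ p.1 → p.2 ≤ σ.rr ρ (p.1 - 1)) := by
  have hc : p ∈ σ.cells := h.1
  have hcell := σ.mem_cells_iff.mp hc
  refine ⟨hcell.1, hcell.2.1, hcell.2.2.1, hcell.2.2.2.1, ?_, ?_⟩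
  · by_contra hle
    push_neg at hle
    exact h.2.1 (by
      have := mem_of_le_rr hρ (by rw [Prod.mk.eta]; exact hc) hle
      rwa [Prod.mk.eta] at this)
  · intro h2
    by_cases hle : p.2 ≤ σ.nu (p.1 - 1)
    · exact le_trans hle (le_max_left _ _)
    push_neg at hle
    have hc2 : (p.1 - 1, p.2) ∈ σ.cells := by
      rw [σ.mem_cells_iff]
      dsimp only
      refine ⟨by omega, by omega, hcell.2.2.1, hcell.2.2.2.1, hle, ?_⟩
      calc p.2 ≤ σ.lam p.1 := hcell.2.2.2.2.2
        _ ≤ σ.lam (p.1 - 1) := σ.lam_anti (p.1 - 1) p.1 (by omega) (by omega) hcell.2.1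
    have hmem : (p.1 - 1, p.2) ∈ insert p ρ := by
      refine h.2.2.2 p (Finset.mem_insert_self p ρ) _ hc2 ?_
      rw [Prod.le_def]
      exact ⟨by omega, le_refl _⟩
    rcases Finset.mem_insert.mp hmem with heq | hmem2
    · exfalso
      have := congrArg Prod.fst heq
      simp at this
      omega
    · exact le_rr hmem2

/-- Toggle-in boxes form an antichain. -/
lemma toggleIn_antichain {p q : ℕ × ℕ} (hp : σ.CanToggleIn ρ p) (hq : σ.CanToggleIn ρ q)
    (hle : p ≤ q) : p = q := by
  by_contra hne
  have : p ∈ insert q ρ := hq.2.2.2 q (Finset.mem_insert_self q ρ) p hp.1 hle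
  rcases Finset.mem_insert.mp this with h | h
  · exact hne h
  · exact hp.2.1 h

/-- Toggle-out boxes form an antichain. -/
lemma toggleOut_antichain {p q : ℕ × ℕ} (hc : p ∈ σ.cells)
    (hp : σ.CanToggleOut ρ p) (hq : σ.CanToggleOut ρ q) (hle : p ≤ q) : p = q := by
  by_contra hne
  have hq' : q ∈ ρ.erase p := Finset.mem_erase.mpr ⟨fun h => hne h.symm, hq.1⟩
  have : p ∈ ρ.erase p := hp.2.2 q hq' p hc hle
  exact Finset.notMem_erase p ρ this

lemma card_le_a {S : Finset (ℕ × ℕ)} (hS : S ⊆ σ.cells)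
    (hanti : ∀ p ∈ S, ∀ q ∈ S, p ≤ q → p = q) : S.card ≤ σ.a := by
  have := Finset.card_le_card_of_injOn (s := S) (t := Finset.Icc 1 σ.a) (fun p => p.1)
    (fun p hp => by
      have := σ.mem_cells_iff.mp (hS hp)
      exact Finset.mem_Icc.mpr ⟨this.1, this.2.1⟩)
    (fun p hp q hq hpq => by
      rcases le_total p.2 q.2 with h | h
      · exact hanti p hp q hq (Prod.le_def.mpr ⟨le_of_eq hpq, h⟩)
      · exact (hanti q hq p hp (Prod.le_def.mpr ⟨le_of_eq hpq.symm, h⟩)).symm)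
  simpa using this

lemma card_le_b {S : Finset (ℕ × ℕ)} (hS : S ⊆ σ.cells)
    (hanti : ∀ p ∈ S, ∀ q ∈ S, p ≤ q → p = q) : S.card ≤ σ.b := by
  have := Finset.card_le_card_of_injOn (s := S) (t := Finset.Icc 1 σ.b) (fun p => p.2)
    (fun p hp => by
      have := σ.mem_cells_iff.mp (hS hp)
      exact Finset.mem_Icc.mpr ⟨this.2.2.1, this.2.2.2.1⟩)
    (fun p hp q hq hpq => by
      rcases le_total p.1 q.1 with h | h
      · exact hanti p hp q hq (Prod.le_def.mpr ⟨h, le_of_eq hpq⟩)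
      · exact (hanti q hq p hp (Prod.le_def.mpr ⟨h, le_of_eq hpq.symm⟩)).symm)
  simpa using this

end SkewShape

namespace SkewShape

variable {σ : SkewShape} {ρ : Finset (ℕ × ℕ)}

/-- The key bound: total number of toggles is at most `a + b - 1`. -/
lemma toggle_card_bound (hρ : σ.IsIdeal ρ) :
    (σ.cells.filter fun p => σ.CanToggleIn ρ p).card +
    (σ.cells.filter fun p => σ.CanToggleOut ρ p).card ≤ σ.a + σ.b - 1 := by
  classical
  set A := σ.cells.filter fun p => σ.CanToggleIn ρ p with hA
  set B := σ.cells.filter fun p => σ.CanToggleOut ρ p with hB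
  have hdisj : Disjoint A B := by
    rw [Finset.disjoint_left]
    intro p hpA hpB
    exact (Finset.mem_filter.mp hpA).2.2.1 (Finset.mem_filter.mp hpB).2.1
  rw [← Finset.card_union_of_disjoint hdisj]
  have hmemB : ∀ p ∈ A ∪ B, p ∈ ρ → σ.CanToggleOut ρ p := by
    intro p hp hpρ
    rcases Finset.mem_union.mp hp with h | h
    · exact absurd hpρ (Finset.mem_filter.mp h).2.2.1
    · exact (Finset.mem_filter.mp h).2
  have hmemA : ∀ p ∈ A ∪ B, p ∉ ρ → σ.CanToggleIn ρ p := by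
    intro p hp hpρ
    rcases Finset.mem_union.mp hp with h | h
    · exact (Finset.mem_filter.mp h).2
    · exact absurd (Finset.mem_filter.mp h).2.1 hpρ
  have hcard := Finset.card_le_card_of_injOn (s := A ∪ B)
    (fun p => if p ∈ ρ then p.1 + (σ.b - σ.rr ρ p.1) else (p.1 - 1) + (σ.b - σ.rr ρ p.1))
    (t := Finset.Icc 1 (σ.a + σ.b - 1)) ?_ ?_
  · calc (A ∪ B).card ≤ (Finset.Icc 1 (σ.a + σ.b - 1)).card := hcard
      _ = σ.a + σ.b - 1 := by rw [Nat.card_Icc]; omega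
  · -- maps into Icc
    intro p hp
    by_cases hpρ : p ∈ ρ
    · obtain ⟨h1, h2, h3, h4, h5⟩ := toggleOut_facts hρ (hmemB p hp hpρ)
      simp only [Finset.mem_coe, hpρ, if_true, Finset.mem_Icc]
      omega
    · obtain ⟨h1, h2, h3, h4, h5, _⟩ := toggleIn_facts hρ (hmemA p hp hpρ)
      simp only [Finset.mem_coe, hpρ, if_false, Finset.mem_Icc]
      omega
  · -- injective
    intro p hp q hq heq
    simp only [Finset.mem_coe] at hp hq
    by_cases hpρ : p ∈ ρ <;> by_cases hqρ : q ∈ ρ <;>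
      simp only [hpρ, hqρ, if_true, if_false] at heq
    · -- both out
      obtain ⟨p1, p2, p3, p4, p5⟩ := toggleOut_facts hρ (hmemB p hp hpρ)
      obtain ⟨q1, q2, q3, q4, q5⟩ := toggleOut_facts hρ (hmemB q hq hqρ)
      have hrow : p.1 = q.1 := by
        rcases le_total p.1 q.1 with h | h
        · have := rr_anti hρ p1 h q2
          omega
        · have := rr_anti hρ q1 h p2
          omega
      have hcol : p.2 = q.2 := by rw [p5, q5, hrow]
      exact Prod.ext hrow hcol
    · -- p out, q in : impossible
      exfalso
      obtain ⟨p1, p2, p3, p4, p5⟩ := toggleOut_facts hρ (hmemB p hp hpρ)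
      obtain ⟨q1, q2, q3, q4, q5, q6⟩ := toggleIn_facts hρ (hmemA q hq hqρ)
      have hrp : σ.rr ρ p.1 ≤ σ.b := rr_le_b hρ p1 p2
      have hrq : σ.rr ρ q.1 ≤ σ.b := rr_le_b hρ q1 q2
      rcases lt_trichotomy p.1 q.1 with h | h | h
      · have h2q : 2 ≤ q.1 := by omega
        have hq6 := q6 h2q
        have hanti : σ.rr ρ (q.1 - 1) ≤ σ.rr ρ p.1 := rr_anti hρ p1 (by omega) (by omega)
        omega
      · rw [h] at heq
        omega
      · have hanti : σ.rr ρ p.1 ≤ σ.rr ρ q.1 := rr_anti hρ q1 (by omega) p2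
        omega
    · -- p in, q out : impossible
      exfalso
      obtain ⟨p1, p2, p3, p4, p5, p6⟩ := toggleIn_facts hρ (hmemA p hp hpρ)
      obtain ⟨q1, q2, q3, q4, q5⟩ := toggleOut_facts hρ (hmemB q hq hqρ)
      have hrp : σ.rr ρ p.1 ≤ σ.b := rr_le_b hρ p1 p2
      have hrq : σ.rr ρ q.1 ≤ σ.b := rr_le_b hρ q1 q2
      rcases lt_trichotomy q.1 p.1 with h | h | h
      · have h2p : 2 ≤ p.1 := by omega
        have hp6 := p6 h2p
        have hanti : σ.rr ρ (p.1 - 1) ≤ σ.rr ρ q.1 := rr_anti hρ q1 (by omega) (by omega)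
        omega
      · rw [h] at heq
        omega
      · have hanti : σ.rr ρ q.1 ≤ σ.rr ρ p.1 := rr_anti hρ p1 (by omega) q2
        omega
    · -- both in
      obtain ⟨p1, p2, p3, p4, p5, _⟩ := toggleIn_facts hρ (hmemA p hp hpρ)
      obtain ⟨q1, q2, q3, q4, q5, _⟩ := toggleIn_facts hρ (hmemA q hq hqρ)
      have hrow : p.1 = q.1 := by
        rcases le_total p.1 q.1 with h | h
        · have := rr_anti hρ p1 h q2
          omega
        · have := rr_anti hρ q1 h p2
          omega
      rcases le_total p.2 q.2 with h | h
      · exact toggleIn_antichain (hmemA p hp hpρ) (hmemA q hq hqρ)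
          (Prod.le_def.mpr ⟨le_of_eq hrow, h⟩)
      · exact (toggleIn_antichain (hmemA q hq hqρ) (hmemA p hp hpρ)
          (Prod.le_def.mpr ⟨le_of_eq hrow.symm, h⟩)).symm

/-- There is always at least one possible toggle. -/
lemma exists_toggle (hρ : σ.IsIdeal ρ) (hne : σ.cells.Nonempty) :
    (∃ p, σ.CanToggleIn ρ p) ∨ (∃ p, σ.CanToggleOut ρ p) := by
  classical
  by_cases hfull : σ.cells \ ρ = ∅
  · -- ρ = cells : take a maximal element of ρ
    right
    have hρne : ρ.Nonempty := by
      obtain ⟨c, hc⟩ := hne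
      refine ⟨c, ?_⟩
      by_contra h
      have : c ∈ σ.cells \ ρ := Finset.mem_sdiff.mpr ⟨hc, h⟩
      rw [hfull] at this
      exact absurd this (Finset.notMem_empty c)
    obtain ⟨m, hm, hmax⟩ := Finset.exists_max_image ρ (fun p => p.1 + p.2) hρne
    refine ⟨m, hm, fun x hx => hρ.1 (Finset.mem_of_mem_erase hx), ?_⟩
    intro q hq r hr hle
    refine Finset.mem_erase.mpr ⟨?_, hρ.2 q (Finset.mem_of_mem_erase hq) r hr hle⟩
    intro hrm
    subst hrm
    have hq' := Finset.mem_erase.mp hq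
    have hsum : q.1 + q.2 ≤ r.1 + r.2 := hmax q hq'.2
    have h1 : r.1 ≤ q.1 := hle.1
    have h2 : r.2 ≤ q.2 := hle.2
    exact hq'.1 (Prod.ext (by omega) (by omega)).symm
  · -- take a minimal element of cells \ ρ
    left
    have hne2 : (σ.cells \ ρ).Nonempty := Finset.nonempty_iff_ne_empty.mpr hfull
    obtain ⟨m, hm, hmin⟩ := Finset.exists_min_image (σ.cells \ ρ) (fun p => p.1 + p.2) hne2
    rw [Finset.mem_sdiff] at hm
    refine ⟨m, hm.1, hm.2, Finset.insert_subset hm.1 hρ.1, ?_⟩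
    intro q hq r hr hle
    rcases Finset.mem_insert.mp hq with hq1 | hq1
    · by_cases hrρ : r ∈ ρ
      · exact Finset.mem_insert_of_mem hrρ
      · have hr' : r ∈ σ.cells \ ρ := Finset.mem_sdiff.mpr ⟨hr, hrρ⟩
        have hsum : m.1 + m.2 ≤ r.1 + r.2 := hmin r hr'
        have h1 : r.1 ≤ q.1 := hle.1
        have h2 : r.2 ≤ q.2 := hle.2
        have hq2 : q.1 = m.1 := by rw [hq1]
        have hq3 : q.2 = m.2 := by rw [hq1]
        have hrm : r = m := Prod.ext (by omega) (by omega)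
        rw [hrm]
        exact Finset.mem_insert_self _ _
    · exact Finset.mem_insert_of_mem (hρ.2 q hq1 r hr hle)

end SkewShape

/-- inequality from Section 4, Question 3: for a connected skew shape
`σ` with height `a` and width `b`, the jaggedness of every subshape `ρ ∈ J(σ)` satisfies
`1 ≤ jag(ρ) ≤ min {2a, 2b, a+b−1}`; in particular `jag(ρ) < 4ab/(a+b)`. -/
theorem SkewShape.jag_bounds (σ : SkewShape) (hconn : σ.Connected)
    (ρ : Finset (ℕ × ℕ)) (hρ : σ.IsIdeal ρ) :
    1 ≤ σ.jag ρ ∧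
      σ.jag ρ ≤ min (2 * σ.a) (min (2 * σ.b) (σ.a + σ.b - 1)) ∧
      (σ.jag ρ : ℝ) < 4 * (σ.a : ℝ) * (σ.b : ℝ) / ((σ.a : ℝ) + (σ.b : ℝ)) := by
  classical
  set A := σ.cells.filter fun p => σ.CanToggleIn ρ p with hA
  set B := σ.cells.filter fun p => σ.CanToggleOut ρ p with hB
  have hAsub : A ⊆ σ.cells := Finset.filter_subset _ _
  have hBsub : B ⊆ σ.cells := Finset.filter_subset _ _
  have hAanti : ∀ p ∈ A, ∀ q ∈ A, p ≤ q → p = q := by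
    intro p hp q hq hle
    exact toggleIn_antichain (Finset.mem_filter.mp hp).2 (Finset.mem_filter.mp hq).2 hle
  have hBanti : ∀ p ∈ B, ∀ q ∈ B, p ≤ q → p = q := by
    intro p hp q hq hle
    exact toggleOut_antichain (Finset.mem_filter.mp hp).1
      (Finset.mem_filter.mp hp).2 (Finset.mem_filter.mp hq).2 hle
  have hjag : σ.jag ρ = A.card + B.card := rfl
  have h2a : σ.jag ρ ≤ 2 * σ.a := by
    rw [hjag]
    have := card_le_a hAsub hAanti
    have := card_le_a hBsub hBanti
    omega
  have h2b : σ.jag ρ ≤ 2 * σ.b := by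
    rw [hjag]
    have := card_le_b hAsub hAanti
    have := card_le_b hBsub hBanti
    omega
  have hab1 : σ.jag ρ ≤ σ.a + σ.b - 1 := toggle_card_bound hρ
  have h1 : 1 ≤ σ.jag ρ := by
    rcases exists_toggle hρ hconn.1 with ⟨p, hp⟩ | ⟨p, hp⟩
    · have hpA : p ∈ A := Finset.mem_filter.mpr ⟨hp.1, hp⟩
      rw [hjag]
      have := Finset.card_pos.mpr ⟨p, hpA⟩
      omega
    · have hpB : p ∈ B := Finset.mem_filter.mpr ⟨hρ.1 hp.1, hp⟩
      rw [hjag]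
      have := Finset.card_pos.mpr ⟨p, hpB⟩
      omega
  refine ⟨h1, le_min h2a (le_min h2b hab1), ?_⟩
  have ha := σ.ha
  have hb := σ.hb
  -- integer inequality
  have key : (σ.jag ρ : ℤ) * (σ.a + σ.b) < 4 * σ.a * σ.b := by
    have k1 : (σ.jag ρ : ℤ) ≤ 2 * σ.a := by exact_mod_cast h2a
    have k2 : (σ.jag ρ : ℤ) ≤ 2 * σ.b := by exact_mod_cast h2b
    have k3 : (σ.jag ρ : ℤ) + 1 ≤ σ.a + σ.b := by
      have : σ.jag ρ + 1 ≤ σ.a + σ.b := by omega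
      exact_mod_cast this
    have k4 : (1 : ℤ) ≤ σ.a := by exact_mod_cast ha
    have k5 : (1 : ℤ) ≤ σ.b := by exact_mod_cast hb
    nlinarith [mul_nonneg (sub_nonneg.mpr k1) (sub_nonneg.mpr k5),
      mul_nonneg (sub_nonneg.mpr k2) (sub_nonneg.mpr k4)]
  have habpos : (0 : ℝ) < (σ.a : ℝ) + (σ.b : ℝ) := by positivity
  rw [lt_div_iff₀ habpos]
  exact_mod_cast key
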